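/- Let F: T → T' be a triangle functor between triangulated categories with a right adjoint G. Assume that N ⊆ T and N' ⊆ T' are triangulated subcategories satisfying F(N) ⊆ N' and G(N') ⊆ N. Then the induced triangle functor F̄: T/N → T'/N' (the unique functor with F̄ ∘ q = q' ∘ F, where q, q' are the quotient functors) has a right adjoint Ḡ, namely the functor induced by G. Moreover, if G is fully faithful, then Ḡ is fully faithful. -/

import Mathlib

open CategoryTheory Limits Pretriangulated

namespace Paper

variable {T : Type*} [Category T] [HasZeroObject T] [HasShift T ℤ] [Preadditive T]
  [∀ n : ℤ, (shiftFunctor T n).Additive] [Pretriangulated T] [IsTriangulated T]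
variable {T' : Type*} [Category T'] [HasZeroObject T'] [HasShift T' ℤ] [Preadditive T']
  [∀ n : ℤ, (shiftFunctor T' n).Additive] [Pretriangulated T'] [IsTriangulated T']

section Aux

variable (F : T ⥤ T') [F.CommShift ℤ] (G : T' ⥤ T) (adj : F ⊣ G)

/-- The mate of the commutation-with-shift isomorphism of `F`, a natural transformation
`G ⋙ ⟦1⟧ ⟶ ⟦1⟧ ⋙ G`. -/
noncomputable def delta : G ⋙ shiftFunctor T (1 : ℤ) ⟶ shiftFunctor T' (1 : ℤ) ⋙ G :=
  mateEquiv adj adj (F.commShiftIso (1 : ℤ)).hom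

lemma delta_app (X : T') :
    (delta F G adj).app X =
      adj.unit.app ((G.obj X)⟦(1 : ℤ)⟧) ≫
        G.map ((F.commShiftIso (1 : ℤ)).hom.app (G.obj X)) ≫
        G.map ((adj.counit.app X)⟦(1 : ℤ)⟧') := by
  simp [delta, mateEquiv]

lemma isIso_delta : IsIso (delta F G adj) := by
  let adj₃ := (shiftEquiv T (1 : ℤ)).toAdjunction
  let adj₄ := (shiftEquiv T' (1 : ℤ)).toAdjunction
  have h := iterated_mateEquiv_conjugateEquiv adj adj adj₃ adj₄ (F.commShiftIso (1 : ℤ)).hom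
  have h3 : delta F G adj = (mateEquiv adj₄ adj₃).symm
      (conjugateEquiv (adj.comp adj₄) (adj₃.comp adj) (F.commShiftIso (1 : ℤ)).hom) := by
    rw [← h, Equiv.symm_apply_apply]
    rfl
  suffices h4 : ∀ (X : T'), IsIso (((mateEquiv adj₄ adj₃).symm
      (conjugateEquiv (adj.comp adj₄) (adj₃.comp adj) (F.commShiftIso (1 : ℤ)).hom)).app X) by
    haveI := h4
    rw [h3]
    exact @NatIso.isIso_of_isIso_app _ _ _ _ _ _ _ h4
  intro X
  simp only [mateEquiv, Equiv.coe_fn_symm_mk, NatTrans.comp_app, Functor.whiskerRight_app,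
    Functor.whiskerLeft_app, Functor.comp_obj, Equivalence.toAdjunction_unit,
    Equivalence.toAdjunction_counit]
  haveI : IsIso (TwoSquare.natTrans (conjugateEquiv (adj.comp adj₄) (adj₃.comp adj)
      (F.commShiftIso (1 : ℤ)).hom)) :=
    @conjugateEquiv_iso _ _ _ _ _ _ _ _ (adj.comp adj₄) (adj₃.comp adj) (F.commShiftIso (1 : ℤ)).hom
      (Iso.isIso_hom _)
  infer_instance

end Aux

section Crux

lemma W_F_map (F : T ⥤ T') [F.CommShift ℤ] [F.IsTriangulated]
    (N : ObjectProperty T) (N' : ObjectProperty T')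
    (hFN : ∀ X : T, N X → N' (F.obj X)) {X Y : T} (f : X ⟶ Y)
    (hf : N.trW f) : N'.trW (F.map f) := by
  obtain ⟨Z, g, h, hT, hZ⟩ := hf
  exact ⟨F.obj Z, F.map g, F.map h ≫ (F.commShiftIso (1 : ℤ)).hom.app X,
    F.map_distinguished _ hT, hFN Z hZ⟩

lemma W_G_map (F : T ⥤ T') [F.CommShift ℤ] [F.IsTriangulated] (G : T' ⥤ T) (adj : F ⊣ G)
    (N : ObjectProperty T) (N' : ObjectProperty T')
    (hGN' : ∀ Y : T', N' Y → N (G.obj Y)) {X Y : T'} (t : X ⟶ Y)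
    (ht : N'.trW t) : N.trW (G.map t) := by
  rw [ObjectProperty.trW_iff]
  haveI : G.IsRightAdjoint := ⟨F, ⟨adj⟩⟩
  haveI : G.Additive := Functor.additive_of_preserves_binary_products G
  haveI := isIso_delta F G adj
  obtain ⟨Z, g, h, hdist, hZ⟩ := ht
  obtain ⟨C, a, b, hC⟩ := Pretriangulated.distinguished_cocone_triangle (G.map t)
  obtain ⟨ξ, hξ₂, hξ₃⟩ := Pretriangulated.complete_distinguished_triangle_morphism
      (F.mapTriangle.obj (Triangle.mk (G.map t) a b)) (Triangle.mk t g h)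
      (F.map_distinguished _ hC) hdist (adj.counit.app X) (adj.counit.app Y)
      (adj.counit.naturality t)
  change F.obj C ⟶ Z at ξ
  change F.map a ≫ ξ = adj.counit.app Y ≫ g at hξ₂
  change (F.map b ≫ (F.commShiftIso (1 : ℤ)).hom.app (G.obj X)) ≫
    (adj.counit.app X)⟦(1 : ℤ)⟧' = ξ ≫ h at hξ₃
  set δ : (G.obj X)⟦(1 : ℤ)⟧ ⟶ G.obj (X⟦(1 : ℤ)⟧) := (delta F G adj).app X with hδ
  haveI : IsIso δ := inferInstance
  set φ : C ⟶ G.obj Z := adj.unit.app C ≫ G.map ξ with hφ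
  have sq2 : a ≫ φ = G.map g := by
    have h1 := adj.unit.naturality a
    dsimp at h1
    rw [hφ, ← Category.assoc, h1, Category.assoc, ← G.map_comp, hξ₂, G.map_comp,
      ← Category.assoc, adj.right_triangle_components, Category.id_comp]
  have sq3 : φ ≫ G.map h = b ≫ δ := by
    have h2 := adj.unit.naturality b
    dsimp at h2
    rw [hφ, Category.assoc, ← G.map_comp, ← hξ₃, hδ, delta_app]
    simp only [Functor.map_comp, Category.assoc]
    rw [reassoc_of% h2]
  -- the comparison morphism `φ` is an isomorphism
  have : IsIso φ := by
    apply isIso_of_yoneda_map_bijective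
    intro A
    constructor
    · intro ψ₁ ψ₂ h12
      rw [← sub_eq_zero] at h12 ⊢
      rw [← Preadditive.sub_comp] at h12
      set ψ := ψ₁ - ψ₂ with hψdef
      have hb : ψ ≫ b = 0 := by
        have hb1 : (ψ ≫ b) ≫ δ = 0 ≫ δ := by
          rw [Category.assoc, ← sq3, ← Category.assoc, h12, zero_comp, zero_comp]
        exact (cancel_mono δ).1 hb1
      obtain ⟨ψ', hψ'⟩ := Triangle.coyoneda_exact₃ _ hC ψ hb
      change A ⟶ G.obj Y at ψ'
      change ψ = ψ' ≫ a at hψ'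
      have hg0 : ψ' ≫ G.map g = 0 := by
        rw [← sq2, ← Category.assoc, ← hψ', h12]
      have ht0 : (adj.homEquiv A Y).symm ψ' ≫ g = 0 := by
        rw [← Adjunction.homEquiv_naturality_right_symm, hg0]
        simp [Adjunction.homEquiv_counit]
      obtain ⟨χ, hχ⟩ := Triangle.coyoneda_exact₂ _ hdist _ ht0
      change F.obj A ⟶ X at χ
      change (adj.homEquiv A Y).symm ψ' = χ ≫ t at hχ
      have hψ'' : ψ' = (adj.homEquiv A X) χ ≫ G.map t := by
        apply (adj.homEquiv A Y).symm.injective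
        rw [Adjunction.homEquiv_naturality_right_symm, Equiv.symm_apply_apply, ← hχ]
      rw [hψ', hψ'', Category.assoc]
      have := comp_distTriang_mor_zero₁₂ _ hC
      change G.map t ≫ a = 0 at this
      rw [this, comp_zero]
    · intro u
      have hnat := (delta F G adj).naturality t
      dsimp at hnat
      have hinvnat : inv δ ≫ (G.map t)⟦(1 : ℤ)⟧' = G.map (t⟦(1 : ℤ)⟧') ≫ inv ((delta F G adj).app Y) := by
        rw [IsIso.inv_comp_eq, hδ, ← Category.assoc, ← hnat, Category.assoc,
          IsIso.hom_inv_id, Category.comp_id]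
      have hht : h ≫ t⟦(1 : ℤ)⟧' = 0 := comp_distTriang_mor_zero₃₁ _ hdist
      have hx : (u ≫ G.map h ≫ inv δ) ≫ ((G.map t)⟦(1 : ℤ)⟧') = 0 := by
        simp only [Category.assoc]
        rw [hinvnat, ← Functor.map_comp_assoc, hht, G.map_zero, zero_comp, comp_zero]
      obtain ⟨w₀, hw₀⟩ := Triangle.coyoneda_exact₁ _ hC _ hx
      let w : A ⟶ C := w₀
      have hw : u ≫ G.map h ≫ inv δ = w ≫ b := hw₀
      have hr : (u - w ≫ φ) ≫ G.map h = 0 := by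
        rw [Preadditive.sub_comp, Category.assoc, sq3, ← Category.assoc, ← hw]
        simp
      have ht0 : (adj.homEquiv A Z).symm (u - w ≫ φ) ≫ h = 0 := by
        rw [← Adjunction.homEquiv_naturality_right_symm, hr]
        simp [Adjunction.homEquiv_counit]
      obtain ⟨v, hv⟩ := Triangle.coyoneda_exact₃ _ hdist _ ht0
      change F.obj A ⟶ Y at v
      change (adj.homEquiv A Z).symm (u - w ≫ φ) = v ≫ g at hv
      have hru : u - w ≫ φ = (adj.homEquiv A Y) v ≫ G.map g := by
        apply (adj.homEquiv A Z).symm.injective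
        rw [Adjunction.homEquiv_naturality_right_symm, Equiv.symm_apply_apply, ← hv]
      refine ⟨(adj.homEquiv A Y) v ≫ a + w, ?_⟩
      show ((adj.homEquiv A Y) v ≫ a + w) ≫ φ = u
      rw [Preadditive.add_comp, Category.assoc, sq2, ← hru]
      abel
  rw [← ObjectProperty.trW_iff, ← N.trW_isoClosure]
  exact ⟨C, a, b, hC, ⟨G.obj Z, hGN' Z hZ, ⟨asIso φ⟩⟩⟩

end Crux

/-- **Lemma 2.2** (Orlov): Let `F : T ⥤ T'` be a triangle functor with a right adjoint `G`,
and let `N ⊆ T`, `N' ⊆ T'` be triangulated subcategories with `F(N) ⊆ N'` and `G(N') ⊆ N`.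
Then the functor `F̄ : T/N ⥤ T'/N'` induced by `F` on the Verdier quotients (the unique
functor satisfying `F̄ ∘ q = q' ∘ F`) admits a right adjoint `Ḡ`, namely the functor induced
by `G`; moreover, if `G` is fully faithful, then so is `Ḡ`. -/
theorem induced_functor_on_quotients_has_right_adjoint
    (F : T ⥤ T') [F.CommShift ℤ] [F.IsTriangulated] (G : T' ⥤ T) (adj : F ⊣ G)
    (N : ObjectProperty T) [N.IsTriangulated] (N' : ObjectProperty T') [N'.IsTriangulated]
    (hFN : ∀ X : T, N X → N' (F.obj X)) (hGN' : ∀ Y : T', N' Y → N (G.obj Y)) :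
    ∃ (Fbar : N.trW.Localization ⥤ N'.trW.Localization)
      (Gbar : N'.trW.Localization ⥤ N.trW.Localization),
      (N.trW.Q ⋙ Fbar = F ⋙ N'.trW.Q) ∧ (N'.trW.Q ⋙ Gbar = G ⋙ N.trW.Q) ∧
      Nonempty (Fbar ⊣ Gbar) ∧ (G.Full → G.Faithful → Gbar.Full ∧ Gbar.Faithful) := by
  have hFinv : N.trW.IsInvertedBy (F ⋙ N'.trW.Q) := fun X Y f hf =>
    Localization.inverts N'.trW.Q N'.trW _ (W_F_map F N N' hFN f hf)
  have hGinv : N'.trW.IsInvertedBy (G ⋙ N.trW.Q) := fun X Y f hf =>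
    Localization.inverts N.trW.Q N.trW _ (W_G_map F G adj N N' hGN' f hf)
  let Fbar := Localization.Construction.lift (F ⋙ N'.trW.Q) hFinv
  let Gbar := Localization.Construction.lift (G ⋙ N.trW.Q) hGinv
  have hF : N.trW.Q ⋙ Fbar = F ⋙ N'.trW.Q := Localization.Construction.fac _ _
  have hG : N'.trW.Q ⋙ Gbar = G ⋙ N.trW.Q := Localization.Construction.fac _ _
  letI : CatCommSq F N.trW.Q N'.trW.Q Fbar := ⟨eqToIso hF.symm⟩
  letI : CatCommSq G N'.trW.Q N.trW.Q Gbar := ⟨eqToIso hG.symm⟩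
  let A : Fbar ⊣ Gbar := adj.localization N.trW.Q N.trW N'.trW.Q N'.trW Fbar Gbar
  refine ⟨Fbar, Gbar, hF, hG, ⟨A⟩, fun hfull hfaith => ?_⟩
  haveI := hfull
  haveI := hfaith
  haveI : IsIso adj.counit := inferInstance
  haveI : N'.trW.Q.EssSurj := Localization.essSurj N'.trW.Q N'.trW
  have happ : ∀ ob : N'.trW.Localization, IsIso (A.counit.app ob) := by
    intro ob
    have e : N'.trW.Q.obj (N'.trW.Q.objPreimage ob) ≅ ob := N'.trW.Q.objObjPreimageIso ob
    haveI h1 : IsIso (A.counit.app (N'.trW.Q.obj (N'.trW.Q.objPreimage ob))) := by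
      rw [Adjunction.localization_counit_app]
      infer_instance
    have h2 := A.counit.naturality e.hom
    have h3 : A.counit.app ob =
        inv ((Gbar ⋙ Fbar).map e.hom) ≫ A.counit.app (N'.trW.Q.obj (N'.trW.Q.objPreimage ob)) ≫ e.hom := by
      rw [IsIso.eq_inv_comp, h2]
      rfl
    rw [h3]
    infer_instance
  haveI := happ
  haveI : IsIso A.counit := NatIso.isIso_of_isIso_app _
  exact ⟨(A.fullyFaithfulROfIsIsoCounit).full, (A.fullyFaithfulROfIsIsoCounit).faithful⟩

end Paper
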